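/- Let $v_1,\ldots,v_n$ be nonzero real numbers with $|v_i| \le 1$, let $\varepsilon_1,\ldots,\varepsilon_n$ be independent Rademacher random variables, and let $x > 0$ be a real number with upper integer part $k = \lceil x \rceil$. Then $\mathbb{P}(v_1\varepsilon_1 + \cdots + v_n\varepsilon_n = x) \le \binom{n}{\lceil (n+k)/2 \rceil}/2^n$. -/

import Mathlib

open MeasureTheory ProbabilityTheory


section Combinatorics
open Finset

/-- choose is symmetric around the middle: value at ⌈m/2⌉ equals value at ⌊m/2⌋ -/
lemma choose_half_succ (m : ℕ) : m.choose ((m+1)/2) = m.choose (m/2) := by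
  rcases Nat.even_or_odd m with ⟨t, ht⟩ | ⟨t, ht⟩
  · subst ht
    have h1 : (t+t+1)/2 = t := by omega
    have h2 : (t+t)/2 = t := by omega
    rw [h1, h2]
  · subst ht
    have h1 : (2*t+1+1)/2 = t+1 := by omega
    have h2 : (2*t+1)/2 = t := by omega
    rw [h1, h2]
    rw [show t+1 = (2*t+1) - t by omega, Nat.choose_symm (by omega)]

lemma choose_inc {n r s : ℕ} (hrs : r ≤ s) (hs : 2*s ≤ n) :
    n.choose r ≤ n.choose s := by
  induction s with
  | zero => simpa [Nat.le_zero.mp hrs]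
  | succ k ih =>
    rcases Nat.lt_or_ge r (k+1) with h | h
    · exact (ih (by omega) (by omega)).trans
        (Nat.choose_le_succ_of_lt_half_left (by omega))
    · have : r = k+1 := by omega
      simp [this]

lemma choose_dec {n a b : ℕ} (ha : n ≤ 2*a) (hab : a ≤ b) :
    n.choose b ≤ n.choose a := by
  rcases Nat.lt_or_ge n b with h | h
  · simp [Nat.choose_eq_zero_of_lt h]
  · have hA : a ≤ n := le_trans hab h
    calc n.choose b = n.choose (n - b) := (Nat.choose_symm h).symm
      _ ≤ n.choose (n - a) := choose_inc (by omega) (by omega)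
      _ = n.choose a := Nat.choose_symm hA

/-- Sperner's theorem for subfamilies of the powerset of a finite set of naturals. -/
lemma sperner_powerset (E : Finset ℕ) (𝒜 : Finset (Finset ℕ)) (hsub : ∀ S ∈ 𝒜, S ⊆ E)
    (hanti : ∀ S ∈ 𝒜, ∀ T ∈ 𝒜, S ≠ T → ¬ S ⊆ T) :
    𝒜.card ≤ E.card.choose (E.card / 2) := by
  classical
  set f : Finset ℕ → Finset {x // x ∈ E} := fun S => S.subtype (· ∈ E) with hf
  have key : ∀ S ∈ 𝒜, (f S).map (Function.Embedding.subtype _) = S := by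
    intro S hS
    rw [hf]
    rw [Finset.subtype_map]
    exact Finset.filter_true_of_mem fun i hi => hsub S hS hi
  have hinj : Set.InjOn f 𝒜 := by
    intro S hS T hT hST
    have := congrArg (Finset.map (Function.Embedding.subtype (· ∈ E))) hST
    rwa [key S hS, key T hT] at this
  have hcard : (𝒜.image f).card = 𝒜.card := Finset.card_image_of_injOn hinj
  have hanti' : IsAntichain (· ⊆ ·) ((𝒜.image f : Finset (Finset {x // x ∈ E})) : Set (Finset {x // x ∈ E})) := by
    intro b₁ hb₁ b₂ hb₂ hne hsub'
    simp only [Finset.coe_image, Set.mem_image, Finset.mem_coe] at hb₁ hb₂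
    obtain ⟨S, hS, rfl⟩ := hb₁
    obtain ⟨T, hT, rfl⟩ := hb₂
    have hST : S ⊆ T := by
      have h2 : (f S).map (Function.Embedding.subtype (· ∈ E)) ⊆ (f T).map (Function.Embedding.subtype (· ∈ E)) :=
        Finset.map_subset_map.mpr hsub'
      rwa [key S hS, key T hT] at h2
    exact hanti S hS T hT (fun h => hne (by rw [h])) hST
  have := IsAntichain.sperner hanti'
  rw [hcard, Fintype.card_coe] at this
  exact this

/-- Any set of subsets with a fixed weighted signed sum is an antichain, so Sperner applies. -/
lemma target_any_bound (E : Finset ℕ) (w : ℕ → ℝ) (hw : ∀ i ∈ E, 0 < w i) (t : ℝ) :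
    (E.powerset.filter fun S => ∑ i ∈ S, w i - ∑ i ∈ E \ S, w i = t).card
      ≤ E.card.choose (E.card / 2) := by
  classical
  apply sperner_powerset
  · intro S hS
    exact Finset.mem_powerset.mp (Finset.mem_filter.mp hS).1
  · intro S hS T hT hne hsub
    rw [Finset.mem_filter, Finset.mem_powerset] at hS hT
    obtain ⟨hSE, hSsum⟩ := hS
    obtain ⟨hTE, hTsum⟩ := hT
    have hssub : S ⊂ T := ssubset_of_ne_of_subset hne hsub
    obtain ⟨b, hbT, hbS⟩ := Finset.exists_of_ssubset hssub
    have h1 : ∑ i ∈ T \ S, w i + ∑ i ∈ S, w i = ∑ i ∈ T, w i := Finset.sum_sdiff hsub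
    have h2 : 0 < ∑ i ∈ T \ S, w i := by
      apply Finset.sum_pos
      · intro i hi
        exact hw i (hTE (Finset.mem_sdiff.mp hi).1)
      · exact ⟨b, Finset.mem_sdiff.mpr ⟨hbT, hbS⟩⟩
    have h3 : ∑ i ∈ E \ T, w i ≤ ∑ i ∈ E \ S, w i := by
      apply Finset.sum_le_sum_of_subset_of_nonneg
      · exact Finset.sdiff_subset_sdiff (le_refl E) hsub
      · intro i hiE _
        exact le_of_lt (hw i (Finset.mem_sdiff.mp hiE).1)
    linarith

/-- Complementation bijection: counting subsets with sum `y` equals counting sum `-y`. -/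
lemma card_flip (E : Finset ℕ) (w : ℕ → ℝ) (y : ℝ) :
    (E.powerset.filter fun S => ∑ i ∈ S, w i - ∑ i ∈ E \ S, w i = y).card
      = (E.powerset.filter fun S => ∑ i ∈ S, w i - ∑ i ∈ E \ S, w i = -y).card := by
  classical
  apply Finset.card_nbij' (fun S => E \ S) (fun S => E \ S)
  · intro S hS
    rw [Finset.mem_coe, Finset.mem_filter, Finset.mem_powerset] at hS ⊢
    obtain ⟨hSE, hsum⟩ := hS
    rw [Finset.sdiff_sdiff_eq_self hSE]
    exact ⟨Finset.sdiff_subset, by linarith⟩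
  · intro S hS
    rw [Finset.mem_coe, Finset.mem_filter, Finset.mem_powerset] at hS ⊢
    obtain ⟨hSE, hsum⟩ := hS
    rw [Finset.sdiff_sdiff_eq_self hSE]
    exact ⟨Finset.sdiff_subset, by linarith⟩
  · intro S hS
    rw [Finset.mem_coe, Finset.mem_filter, Finset.mem_powerset] at hS
    exact Finset.sdiff_sdiff_eq_self hS.1
  · intro S hS
    rw [Finset.mem_coe, Finset.mem_filter, Finset.mem_powerset] at hS
    exact Finset.sdiff_sdiff_eq_self hS.1

lemma pascal' (m L : ℕ) (hm : 1 ≤ m) (hL : 1 ≤ L) :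
    m.choose L = (m-1).choose (L-1) + (m-1).choose L := by
  obtain ⟨m', rfl⟩ : ∃ m', m = m' + 1 := ⟨m - 1, by omega⟩
  obtain ⟨L', rfl⟩ : ∃ L', L = L' + 1 := ⟨L - 1, by omega⟩
  simp only [Nat.add_sub_cancel]
  exact Nat.choose_succ_succ m' L'

/-- Key combinatorial lemma: nonuniform Littlewood-Offord counting bound. -/
lemma key_lemma (E : Finset ℕ) : ∀ (w : ℕ → ℝ) (c x : ℝ), 0 < c → 0 < x →
    (∀ i ∈ E, 0 < w i ∧ w i ≤ c) →
    (E.powerset.filter fun S => ∑ i ∈ S, w i - ∑ i ∈ E \ S, w i = x).card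
      ≤ E.card.choose ((E.card + ⌈x/c⌉₊ + 1)/2) := by
  classical
  induction E using Finset.strongInduction with
  | _ E ih =>
  intro w c x hc hx hw
  rcases E.eq_empty_or_nonempty with rfl | hE
  · simp only [Finset.powerset_empty, Finset.filter_singleton, Finset.sum_empty,
      Finset.empty_sdiff, Finset.sum_empty, sub_zero]
    have : ¬ ((0:ℝ) = x) := by linarith
    simp only [this, if_false]
    simp
  obtain ⟨a, haE, hamax⟩ := E.exists_max_image w hE
  have hc' : 0 < w a := (hw a haE).1
  have hc'c : w a ≤ c := (hw a haE).2
  obtain ⟨n, hncard⟩ : ∃ m, E.card = m := ⟨_, rfl⟩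
  have hn : 1 ≤ n := hncard ▸ Finset.card_pos.mpr hE
  obtain ⟨k, hkc⟩ : ∃ m, ⌈x / w a⌉₊ = m := ⟨_, rfl⟩
  have hk : 1 ≤ k := hkc ▸ Nat.ceil_pos.mpr (div_pos hx hc')
  have hE'card : (E.erase a).card = n - 1 := by
    rw [Finset.card_erase_of_mem haE, hncard]
  have hE'sub : E.erase a ⊂ E := Finset.erase_ssubset haE
  have hw' : ∀ i ∈ E.erase a, 0 < w i ∧ w i ≤ w a := fun i hi =>
    ⟨(hw i (Finset.mem_of_mem_erase hi)).1, hamax i (Finset.mem_of_mem_erase hi)⟩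
  have hsplit : ((E.powerset.filter fun S => ∑ i ∈ S, w i - ∑ i ∈ E \ S, w i = x).filter
        (fun S => a ∈ S)).card
      + ((E.powerset.filter fun S => ∑ i ∈ S, w i - ∑ i ∈ E \ S, w i = x).filter
        (fun S => ¬ a ∈ S)).card
      = (E.powerset.filter fun S => ∑ i ∈ S, w i - ∑ i ∈ E \ S, w i = x).card :=
    Finset.card_filter_add_card_filter_not _
  -- the subfamily containing a injects into subsets of E.erase a with target x - w a
  have h1 : ((E.powerset.filter fun S => ∑ i ∈ S, w i - ∑ i ∈ E \ S, w i = x).filter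
        (fun S => a ∈ S)).card
      ≤ ((E.erase a).powerset.filter fun T =>
          ∑ i ∈ T, w i - ∑ i ∈ (E.erase a) \ T, w i = x - w a).card := by
    apply Finset.card_le_card_of_injOn (fun S => S.erase a)
    · intro S hS
      rw [Finset.mem_coe, Finset.mem_filter] at hS
      obtain ⟨hS𝒜, haS⟩ := hS
      rw [Finset.mem_filter, Finset.mem_powerset] at hS𝒜
      obtain ⟨hSE, hsum⟩ := hS𝒜
      rw [Finset.mem_coe, Finset.mem_filter, Finset.mem_powerset]
      refine ⟨Finset.erase_subset_erase a hSE, ?_⟩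
      have e1 : ∑ i ∈ S.erase a, w i + w a = ∑ i ∈ S, w i := Finset.sum_erase_add S w haS
      have e2 : (E.erase a) \ S.erase a = E \ S := by
        ext i
        simp only [Finset.mem_sdiff, Finset.mem_erase]
        constructor
        · rintro ⟨⟨hia, hiE⟩, h⟩
          exact ⟨hiE, fun hiS => h ⟨hia, hiS⟩⟩
        · rintro ⟨hiE, hiS⟩
          exact ⟨⟨fun h => hiS (h ▸ haS), hiE⟩, fun h => hiS h.2⟩
      rw [e2]
      linarith
    · intro S hS T hT hST
      have haS : a ∈ S := (Finset.mem_filter.mp hS).2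
      have haT : a ∈ T := (Finset.mem_filter.mp hT).2
      have hST' : S.erase a = T.erase a := hST
      rw [← Finset.insert_erase haS, hST', Finset.insert_erase haT]
  -- the subfamily avoiding a injects into subsets of E.erase a with target x + w a
  have h0 : ((E.powerset.filter fun S => ∑ i ∈ S, w i - ∑ i ∈ E \ S, w i = x).filter
        (fun S => ¬ a ∈ S)).card
      ≤ ((E.erase a).powerset.filter fun T =>
          ∑ i ∈ T, w i - ∑ i ∈ (E.erase a) \ T, w i = x + w a).card := by
    apply Finset.card_le_card_of_injOn (fun S => S)
    · intro S hS
      rw [Finset.mem_coe, Finset.mem_filter] at hS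
      obtain ⟨hS𝒜, haS⟩ := hS
      rw [Finset.mem_filter, Finset.mem_powerset] at hS𝒜
      obtain ⟨hSE, hsum⟩ := hS𝒜
      rw [Finset.mem_coe, Finset.mem_filter, Finset.mem_powerset]
      refine ⟨Finset.subset_erase.mpr ⟨hSE, haS⟩, ?_⟩
      have e2 : (E.erase a) \ S = (E \ S).erase a := by
        ext i
        simp only [Finset.mem_sdiff, Finset.mem_erase]
        tauto
      have haES : a ∈ E \ S := Finset.mem_sdiff.mpr ⟨haE, haS⟩
      have e1 : ∑ i ∈ (E \ S).erase a, w i + w a = ∑ i ∈ E \ S, w i :=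
        Finset.sum_erase_add _ w haES
      rw [e2]
      linarith
    · intro S _ T _ h
      exact h
  -- bound for the avoiding part via induction
  have hB0 : ((E.erase a).powerset.filter fun T =>
        ∑ i ∈ T, w i - ∑ i ∈ (E.erase a) \ T, w i = x + w a).card
      ≤ (n-1).choose ((n+k+1)/2) := by
    have h := ih (E.erase a) hE'sub w (w a) (x + w a) hc' (by linarith) hw'
    have hceil : ⌈(x + w a)/(w a)⌉₊ = k + 1 := by
      have hxx : (x + w a)/(w a) = x / w a + 1 := by field_simp
      rw [hxx, Nat.ceil_add_one (le_of_lt (div_pos hx hc')), hkc]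
    rw [hE'card, hceil] at h
    have hidx : (n - 1 + (k + 1) + 1)/2 = (n+k+1)/2 := by omega
    rwa [hidx] at h
  -- bound for the containing part, case analysis
  have hB1 : ((E.erase a).powerset.filter fun T =>
        ∑ i ∈ T, w i - ∑ i ∈ (E.erase a) \ T, w i = x - w a).card
      ≤ (n-1).choose ((n+k+1)/2 - 1) := by
    rcases lt_trichotomy x (w a) with hlt | heq | hgt
    · -- x < w a : flip to target w a - x, whose ceil is 1; also k = 1
      have hkone : k = 1 := by
        have h1 : x / w a ≤ ((1:ℕ):ℝ) := by
          push_cast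
          exact le_of_lt ((div_lt_one hc').mpr hlt)
        have h2 := Nat.ceil_le.mpr h1
        omega
      have hflip := card_flip (E.erase a) w (x - w a)
      have hrw : ((E.erase a).powerset.filter fun S =>
            ∑ i ∈ S, w i - ∑ i ∈ (E.erase a) \ S, w i = -(x - w a))
          = ((E.erase a).powerset.filter fun S =>
            ∑ i ∈ S, w i - ∑ i ∈ (E.erase a) \ S, w i = w a - x) := by
        congr 1
        funext S
        rw [neg_sub]
      rw [hrw] at hflip
      rw [hflip]
      have h := ih (E.erase a) hE'sub w (w a) (w a - x) hc' (by linarith) hw'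
      have hceil : ⌈(w a - x)/(w a)⌉₊ = 1 := by
        have h1 : (w a - x)/(w a) ≤ ((1:ℕ):ℝ) := by
          push_cast
          rw [div_le_one hc']
          linarith
        have h2 : 0 < (w a - x)/(w a) := div_pos (by linarith) hc'
        have h3 := Nat.ceil_le.mpr h1
        have h4 : 1 ≤ ⌈(w a - x)/(w a)⌉₊ := Nat.ceil_pos.mpr h2
        omega
      rw [hE'card, hceil] at h
      refine h.trans ?_
      have hidx : (n+k+1)/2 - 1 = n/2 := by omega
      rw [hidx]
      exact choose_dec (by omega) (by omega)
    · -- x = w a : target is 0, use Sperner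
      have hkone : k = 1 := by
        rw [← hkc, ← heq, div_self (ne_of_gt hx), Nat.ceil_one]
      have h0' : x - w a = 0 := by linarith
      rw [h0']
      have h := target_any_bound (E.erase a) w (fun i hi => (hw' i hi).1) 0
      rw [hE'card] at h
      refine h.trans ?_
      have hidx : (n+k+1)/2 - 1 = n/2 := by omega
      rw [hidx]
      rcases Nat.even_or_odd n with ⟨t, ht⟩ | ⟨t, ht⟩
      · have hne : n / 2 = (n-1+1)/2 := by omega
        rw [hne, choose_half_succ]
      · have hno : n / 2 = (n-1)/2 := by omega
        rw [hno]
    · -- x > w a : target x - w a > 0, ceil drops by one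
      have h := ih (E.erase a) hE'sub w (w a) (x - w a) hc' (by linarith) hw'
      have hk2 : 2 ≤ k := by
        have hgt1 : ((1:ℕ):ℝ) < x / w a := by
          push_cast
          exact (one_lt_div hc').mpr hgt
        have := Nat.lt_ceil.mpr hgt1
        omega
      have hceil : ⌈(x - w a)/(w a)⌉₊ = k - 1 := by
        have hxx : x/(w a) = (x - w a)/(w a) + 1 := by field_simp; ring
        have hh : k = ⌈(x - w a)/(w a)⌉₊ + 1 := by
          rw [← hkc, hxx, Nat.ceil_add_one (le_of_lt (div_pos (by linarith) hc'))]
        omega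
      rw [hE'card, hceil] at h
      have hidx : (n - 1 + (k - 1) + 1)/2 = (n+k+1)/2 - 1 := by omega
      rwa [hidx] at h
  -- combine via Pascal
  have htotal : (E.powerset.filter fun S => ∑ i ∈ S, w i - ∑ i ∈ E \ S, w i = x).card
      ≤ n.choose ((n+k+1)/2) := by
    rw [pascal' n ((n+k+1)/2) hn (by omega), ← hsplit]
    exact Nat.add_le_add (h1.trans hB1) (h0.trans hB0)
  rw [hncard]
  refine htotal.trans ?_
  -- compare with the bound using c instead of w a
  have hkk : ⌈x/c⌉₊ ≤ k := by
    rw [← hkc]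
    apply Nat.ceil_le_ceil
    apply div_le_div_of_nonneg_left (le_of_lt hx) hc' hc'c
  have hk0 : 1 ≤ ⌈x/c⌉₊ := Nat.ceil_pos.mpr (div_pos hx hc)
  exact choose_dec (by omega) (by omega)

end Combinatorics



lemma ceil_q (m : ℕ) : ⌈((m:ℚ))/2⌉₊ = (m+1)/2 := by
  apply le_antisymm
  · apply Nat.ceil_le.mpr
    rw [div_le_iff₀ (by norm_num : (0:ℚ) < 2)]
    exact_mod_cast (by omega : m ≤ ((m+1)/2) * 2)
  · have h := Nat.le_ceil ((m:ℚ)/2)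
    have h2 : (m:ℚ) ≤ 2 * ⌈((m:ℚ))/2⌉₊ := by
      rw [div_le_iff₀ (by norm_num : (0:ℚ) < 2)] at h
      linarith
    have h3 : m ≤ 2 * ⌈((m:ℚ))/2⌉₊ := by exact_mod_cast h2
    omega

/-- A Rademacher random variable takes values `1` and `-1` each with probability `1/2`. -/
def IsRademacher {Ω : Type*} [MeasurableSpace Ω] (μ : Measure Ω) (f : Ω → ℝ) : Prop :=
  μ {ω | f ω = 1} = 1 / 2 ∧ μ {ω | f ω = -1} = 1 / 2

theorem littlewood_offord_nonuniform_dim_one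
    {Ω : Type*} [MeasurableSpace Ω] (μ : Measure Ω) [IsProbabilityMeasure μ]
    (n : ℕ) (v : ℕ → ℝ) (hv0 : ∀ i < n, v i ≠ 0) (hv1 : ∀ i < n, |v i| ≤ 1)
    (ε : ℕ → Ω → ℝ) (hmeas : ∀ i, Measurable (ε i))
    (hindep : iIndepFun ε μ)
    (hrad : ∀ i, IsRademacher μ (ε i))
    (x : ℝ) (hx : 0 < x) :
    μ {ω | ∑ i ∈ Finset.range n, v i * ε i ω = x}
      ≤ (n.choose ⌈((n : ℚ) + ⌈x⌉₊) / 2⌉₊ : ENNReal) / 2 ^ n := by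
  classical
  set τ : Finset ℕ → ℕ → ℝ := fun S i =>
    if i ∈ S then (if 0 < v i then 1 else -1) else (if 0 < v i then -1 else 1) with hτ
  have hτpm : ∀ S i, τ S i = 1 ∨ τ S i = -1 := by
    intro S i
    rw [hτ]
    by_cases h1 : i ∈ S <;> by_cases h2 : 0 < v i <;> simp [h1, h2]
  set F : Finset ℕ → Set Ω := fun S => ⋂ i ∈ Finset.range n, {ω | ε i ω = τ S i} with hF
  set N : Set Ω := ⋃ i ∈ Finset.range n, {ω | ε i ω ≠ 1 ∧ ε i ω ≠ -1} with hNdef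
  set 𝒜 : Finset (Finset ℕ) := (Finset.range n).powerset.filter
    (fun S => ∑ i ∈ S, |v i| - ∑ i ∈ Finset.range n \ S, |v i| = x) with h𝒜
  -- each atom has probability (1/2)^n
  have hFmeas : ∀ S : Finset ℕ, μ (F S) = (1/2 : ENNReal)^n := by
    intro S
    rw [hF]
    have := hindep.meas_biInter (S := Finset.range n)
      (s := fun i => {ω | ε i ω = τ S i})
      (fun i _ => ⟨{τ S i}, measurableSet_singleton _, rfl⟩)
    rw [this]
    have heach : ∀ i ∈ Finset.range n, μ {ω | ε i ω = τ S i} = (1/2 : ENNReal) := by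
      intro i _
      rcases hτpm S i with h | h <;> rw [h]
      · exact (hrad i).1
      · exact (hrad i).2
    rw [Finset.prod_congr rfl heach, Finset.prod_const, Finset.card_range]
  -- the bad event is null
  have hN : μ N = 0 := by
    rw [hNdef]
    apply le_antisymm _ zero_le
    refine le_trans (measure_biUnion_finset_le _ _) ?_
    apply le_of_eq
    apply Finset.sum_eq_zero
    intro i _
    have hmeas1 : MeasurableSet {ω | ε i ω = 1} := hmeas i (measurableSet_singleton 1)
    have hmeas2 : MeasurableSet {ω | ε i ω = -1} := hmeas i (measurableSet_singleton (-1))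
    have hdisj : Disjoint {ω | ε i ω = 1} {ω | ε i ω = -1} := by
      rw [Set.disjoint_left]
      intro ω h1 h2
      simp only [Set.mem_setOf_eq] at h1 h2
      rw [h1] at h2
      norm_num at h2
    have hun : μ ({ω | ε i ω = 1} ∪ {ω | ε i ω = -1}) = 1 := by
      rw [measure_union hdisj hmeas2, (hrad i).1, (hrad i).2]
      exact ENNReal.add_halves 1
    have hcompl : {ω | ε i ω ≠ 1 ∧ ε i ω ≠ -1} = ({ω | ε i ω = 1} ∪ {ω | ε i ω = -1})ᶜ := by
      ext ω
      simp [not_or]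
    rw [hcompl]
    rw [prob_compl_eq_zero_iff (hmeas1.union hmeas2)]
    exact hun
  -- inclusion into the union of relevant atoms
  have hincl : {ω | ∑ i ∈ Finset.range n, v i * ε i ω = x} ⊆ (⋃ S ∈ 𝒜, F S) ∪ N := by
    intro ω hω
    simp only [Set.mem_setOf_eq] at hω
    by_cases hG : ∀ i ∈ Finset.range n, ε i ω = 1 ∨ ε i ω = -1
    · left
      set S : Finset ℕ := (Finset.range n).filter (fun i => 0 < v i * ε i ω) with hSdef
      have hval : ∀ i ∈ Finset.range n,
          (i ∈ S → v i * ε i ω = |v i|) ∧ (i ∉ S → v i * ε i ω = -|v i|) := by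
        intro i hi
        have hvi : v i ≠ 0 := hv0 i (Finset.mem_range.mp hi)
        have hεabs : |ε i ω| = 1 := by
          rcases hG i hi with h | h <;> rw [h] <;> norm_num
        have habs : |v i * ε i ω| = |v i| := by
          rw [abs_mul, hεabs, mul_one]
        constructor
        · intro hiS
          have hpos : 0 < v i * ε i ω := (Finset.mem_filter.mp hiS).2
          rw [← habs, abs_of_pos hpos]
        · intro hiS
          have hne : v i * ε i ω ≠ 0 := by
            apply mul_ne_zero hvi
            intro h0
            rw [h0] at hεabs
            norm_num at hεabs
          have hneg : v i * ε i ω < 0 := by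
            rcases lt_trichotomy (v i * ε i ω) 0 with h | h | h
            · exact h
            · exact absurd h hne
            · exact absurd (Finset.mem_filter.mpr ⟨hi, h⟩) hiS
          rw [← habs, abs_of_neg hneg, neg_neg]
      have hsum : ∑ i ∈ S, |v i| - ∑ i ∈ Finset.range n \ S, |v i| = x := by
        have hsplit := Finset.sum_filter_add_sum_filter_not (Finset.range n)
          (fun i => 0 < v i * ε i ω) (fun i => v i * ε i ω)
        have e1 : ∑ i ∈ S, v i * ε i ω = ∑ i ∈ S, |v i| := by
          apply Finset.sum_congr rfl
          intro i hi
          exact (hval i (Finset.mem_filter.mp hi).1).1 hi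
        have e2 : ∑ i ∈ (Finset.range n).filter (fun i => ¬ 0 < v i * ε i ω), v i * ε i ω
            = ∑ i ∈ Finset.range n \ S, (-|v i|) := by
          rw [Finset.filter_not]
          apply Finset.sum_congr rfl
          intro i hi
          have hi' := Finset.mem_sdiff.mp hi
          exact (hval i hi'.1).2 hi'.2
        rw [e1, e2] at hsplit
        rw [Finset.sum_neg_distrib] at hsplit
        rw [hω] at hsplit
        linarith
      have hS𝒜 : S ∈ 𝒜 := by
        rw [h𝒜, Finset.mem_filter, Finset.mem_powerset]
        exact ⟨Finset.filter_subset _ _, hsum⟩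
      refine Set.mem_biUnion hS𝒜 ?_
      rw [hF]
      apply Set.mem_iInter₂.mpr
      intro i hi
      show ε i ω = τ S i
      have hvi : v i ≠ 0 := hv0 i (Finset.mem_range.mp hi)
      rcases hG i hi with h1 | h1 <;> by_cases hvp : 0 < v i <;>
        by_cases hiS : i ∈ S <;> simp only [hτ, hiS, hvp, if_true, if_false] <;>
        first
          | exact h1
          | · exfalso
              have := (Finset.mem_filter.mp hiS).2
              nlinarith [hv0 i (Finset.mem_range.mp hi)]
          | · exfalso
              have hvneg : v i < 0 := lt_of_le_of_ne (not_lt.mp hvp) hvi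
              have hpos : 0 < v i * ε i ω := by nlinarith
              exact hiS (Finset.mem_filter.mpr ⟨hi, hpos⟩)
          | · exfalso
              have hpos : 0 < v i * ε i ω := by nlinarith
              exact hiS (Finset.mem_filter.mpr ⟨hi, hpos⟩)
          | · exfalso
              have := (Finset.mem_filter.mp hiS).2
              have hvneg : v i < 0 := lt_of_le_of_ne (not_lt.mp hvp) hvi
              nlinarith
    · right
      push_neg at hG
      obtain ⟨i, hi, h1, h2⟩ := hG
      rw [hNdef]
      exact Set.mem_biUnion hi ⟨h1, h2⟩
  -- counting bound from the key lemma
  have hcount : 𝒜.card ≤ n.choose ((n + ⌈x⌉₊ + 1)/2) := by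
    have h := key_lemma (Finset.range n) (fun i => |v i|) 1 x one_pos hx
      (fun i hi => ⟨abs_pos.mpr (hv0 i (Finset.mem_range.mp hi)),
        hv1 i (Finset.mem_range.mp hi)⟩)
    rw [Finset.card_range, div_one] at h
    exact h
  have hidx : ⌈((n : ℚ) + ⌈x⌉₊) / 2⌉₊ = (n + ⌈x⌉₊ + 1)/2 := by
    have hcast : ((n : ℚ) + ⌈x⌉₊) = ((n + ⌈x⌉₊ : ℕ) : ℚ) := by push_cast; ring
    rw [hcast, ceil_q]
  calc μ {ω | ∑ i ∈ Finset.range n, v i * ε i ω = x}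
      ≤ μ ((⋃ S ∈ 𝒜, F S) ∪ N) := measure_mono hincl
    _ ≤ μ (⋃ S ∈ 𝒜, F S) + μ N := measure_union_le _ _
    _ = μ (⋃ S ∈ 𝒜, F S) := by rw [hN, add_zero]
    _ ≤ ∑ S ∈ 𝒜, μ (F S) := measure_biUnion_finset_le _ _
    _ = 𝒜.card * (1/2 : ENNReal)^n := by
        rw [Finset.sum_congr rfl (fun S _ => hFmeas S), Finset.sum_const, nsmul_eq_mul]
    _ ≤ (n.choose ⌈((n : ℚ) + ⌈x⌉₊) / 2⌉₊ : ENNReal) * (1/2 : ENNReal)^n := by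
        apply mul_le_mul_left
        rw [hidx]
        exact_mod_cast hcount
    _ = (n.choose ⌈((n : ℚ) + ⌈x⌉₊) / 2⌉₊ : ENNReal) / 2 ^ n := by
        rw [one_div, ← ENNReal.inv_pow, ← div_eq_mul_inv]
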